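/- Let (A,≻,≺) be a dendriform algebra. There exists a compatible quadri-algebra structure (↘,↗,↖,↙) on A, i.e. one with x≻y = x↗y + x↘y and x≺y = x↖y + x↙y for all x,y ∈ A, if and only if there exist a bimodule (l_≻,r_≻,l_≺,r_≺,V) of (A,≻,≺) and an invertible O-operator T : V → A of (A,≻,≺) associated to this bimodule. -/

import Mathlib

open LinearMap

/-- Dendriform algebra axioms for a pair of bilinear products `succ` (≻) and `prec` (≺). -/
def IsDendriform {K A : Type*} [Field K] [AddCommGroup A] [Module K A]
    (succ prec : A →ₗ[K] A →ₗ[K] A) : Prop :=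
  (∀ x y z : A, prec (prec x y) z = prec x (succ y z + prec y z)) ∧
  (∀ x y z : A, prec (succ x y) z = succ x (prec y z)) ∧
  (∀ x y z : A, succ x (succ y z) = succ (succ x y + prec x y) z)

/-- Bimodule of a dendriform algebra `(A, succ, prec)` on `V`
(maps `l_≻ = ls`, `r_≻ = rs`, `l_≺ = lp`, `r_≺ = rp`). -/
def IsDendBimodule {K A V : Type*} [Field K] [AddCommGroup A] [Module K A]
    [AddCommGroup V] [Module K V] (succ prec : A →ₗ[K] A →ₗ[K] A)
    (ls rs lp rp : A →ₗ[K] V →ₗ[K] V) : Prop :=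
  (∀ x y : A, lp (prec x y) = lp x ∘ₗ (lp y + ls y)) ∧
  (∀ x y : A, rp x ∘ₗ lp y = lp y ∘ₗ (rp x + rs x)) ∧
  (∀ x y : A, rp x ∘ₗ rp y = rp (succ y x + prec y x)) ∧
  (∀ x y : A, lp (succ x y) = ls x ∘ₗ lp y) ∧
  (∀ x y : A, rp x ∘ₗ ls y = ls y ∘ₗ rp x) ∧
  (∀ x y : A, rp x ∘ₗ rs y = rs (prec y x)) ∧
  (∀ x y : A, ls (succ x y + prec x y) = ls x ∘ₗ ls y) ∧
  (∀ x y : A, rs x ∘ₗ (lp y + ls y) = ls y ∘ₗ rs x) ∧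
  (∀ x y : A, rs x ∘ₗ (rs y + rp y) = rs (succ y x))

/-- Quadri-algebra axioms for the four products ↘ (`dse`), ↗ (`dne`), ↖ (`dnw`), ↙ (`dsw`). -/
def IsQuadri {K A : Type*} [Field K] [AddCommGroup A] [Module K A]
    (dse dne dnw dsw : A →ₗ[K] A →ₗ[K] A) : Prop :=
  (∀ x y z : A, dnw (dnw x y) z = dnw x (dse y z + dne y z + dnw y z + dsw y z)) ∧
  (∀ x y z : A, dnw (dne x y) z = dne x (dnw y z + dsw y z)) ∧
  (∀ x y z : A, dne (dne x y + dnw x y) z = dne x (dne y z + dse y z)) ∧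
  (∀ x y z : A, dnw (dsw x y) z = dsw x (dne y z + dnw y z)) ∧
  (∀ x y z : A, dnw (dse x y) z = dse x (dnw y z)) ∧
  (∀ x y z : A, dne (dse x y + dsw x y) z = dse x (dne y z)) ∧
  (∀ x y z : A, dsw (dnw x y + dsw x y) z = dsw x (dse y z + dsw y z)) ∧
  (∀ x y z : A, dsw (dne x y + dse x y) z = dse x (dsw y z)) ∧
  (∀ x y z : A, dse (dse x y + dne x y + dnw x y + dsw x y) z = dse x (dse y z))


/-- Auxiliary: conjugate a bilinear action by maps `T`, `S`. -/
def conjMap {K A V : Type*} [Field K] [AddCommGroup A] [Module K A]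
    [AddCommGroup V] [Module K V] (T : V →ₗ[K] A) (S : A →ₗ[K] V)
    (M : A →ₗ[K] V →ₗ[K] V) : A →ₗ[K] A →ₗ[K] A where
  toFun x := T ∘ₗ M x ∘ₗ S
  map_add' x y := by ext a; simp
  map_smul' c x := by ext a; simp

@[simp] lemma conjMap_apply {K A V : Type*} [Field K] [AddCommGroup A] [Module K A]
    [AddCommGroup V] [Module K V] (T : V →ₗ[K] A) (S : A →ₗ[K] V)
    (M : A →ₗ[K] V →ₗ[K] V) (x y : A) : conjMap T S M x y = T (M x (S y)) := rfl

/-- Corollary 3.4.10: a dendriform algebra `(A, ≻, ≺)` admits a compatible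
quadri-algebra structure (with `x≻y = x↗y + x↘y` and `x≺y = x↖y + x↙y`) if and only
if there is an invertible `O`-operator of `(A, ≻, ≺)` associated to some bimodule. -/
theorem compatible_quadri_iff_invertible_Ooperator
    {K : Type*} {A : Type u} [Field K] [CharZero K] [AddCommGroup A] [Module K A]
    (succ prec : A →ₗ[K] A →ₗ[K] A)
    (hdend : IsDendriform succ prec) :
    (∃ dse dne dnw dsw : A →ₗ[K] A →ₗ[K] A,
        IsQuadri dse dne dnw dsw ∧
        (∀ x y : A, succ x y = dne x y + dse x y) ∧
        (∀ x y : A, prec x y = dnw x y + dsw x y)) ↔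
    (∃ (V : Type u) (_ : AddCommGroup V) (_ : Module K V)
        (ls rs lp rp : A →ₗ[K] V →ₗ[K] V) (T : V →ₗ[K] A),
        IsDendBimodule succ prec ls rs lp rp ∧
        Function.Bijective T ∧
        (∀ u v : V, succ (T u) (T v) = T (ls (T u) v + rs (T v) u)) ∧
        (∀ u v : V, prec (T u) (T v) = T (lp (T u) v + rp (T v) u))) := by

  constructor
  · rintro ⟨dse, dne, dnw, dsw, ⟨q1, q2, q3, q4, q5, q6, q7, q8, q9⟩, hs, hp⟩
    refine ⟨A, inferInstance, inferInstance, dse, dne.flip, dsw, dnw.flip, LinearMap.id,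
      ⟨?_, ?_, ?_, ?_, ?_, ?_, ?_, ?_, ?_⟩, Function.bijective_id, ?_, ?_⟩
    · intro x y; ext v
      simp only [comp_apply, LinearMap.add_apply, flip_apply]
      rw [hp x y, q7, add_comm (dse y v)]
    · intro x y; ext v
      simp only [comp_apply, LinearMap.add_apply, flip_apply]
      rw [q4, add_comm (dne v x)]
    · intro x y; ext v
      simp only [comp_apply, LinearMap.add_apply, flip_apply]
      rw [q1, hs, hp]
      exact congrArg _ (by abel)
    · intro x y; ext v
      simp only [comp_apply, LinearMap.add_apply, flip_apply]
      rw [hs, q8]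
    · intro x y; ext v
      simp only [comp_apply, LinearMap.add_apply, flip_apply]
      exact q5 y v x
    · intro x y; ext v
      simp only [comp_apply, LinearMap.add_apply, flip_apply]
      rw [q2, ← hp]
    · intro x y; ext v
      simp only [comp_apply, LinearMap.add_apply, flip_apply]
      rw [hs, hp, show dne x y + dse x y + (dnw x y + dsw x y)
        = dse x y + dne x y + dnw x y + dsw x y from by abel, q9]
    · intro x y; ext v
      simp only [comp_apply, LinearMap.add_apply, flip_apply]
      rw [add_comm (dsw y v)]
      exact q6 y v x
    · intro x y; ext v
      simp only [comp_apply, LinearMap.add_apply, flip_apply]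
      rw [q3, ← hs]
    · intro u v
      simp only [id_coe, id_eq, flip_apply]
      rw [hs, add_comm]
    · intro u v
      simp only [id_coe, id_eq, flip_apply]
      rw [hp, add_comm]
  · rintro ⟨V, _, _, ls, rs, lp, rp, T, ⟨b1, b2, b3, b4, b5, b6, b7, b8, b9⟩, hbij, hOs, hOp⟩
    set E := LinearEquiv.ofBijective T hbij with hE
    set S : A →ₗ[K] V := E.symm.toLinearMap with hSdef
    have hTS : ∀ x : A, T (S x) = x := fun x => E.apply_symm_apply x
    have hST : ∀ u : V, S (T u) = u := fun u => E.symm_apply_apply u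
    set dse := conjMap T S ls with hdseD
    set dne := (conjMap T S rs).flip with hdneD
    set dnw := (conjMap T S rp).flip with hdnwD
    set dsw := conjMap T S lp with hdswD
    have hdse : ∀ x y : A, dse x y = T (ls x (S y)) := fun _ _ => rfl
    have hdne : ∀ x y : A, dne x y = T (rs y (S x)) := fun _ _ => rfl
    have hdnw : ∀ x y : A, dnw x y = T (rp y (S x)) := fun _ _ => rfl
    have hdsw : ∀ x y : A, dsw x y = T (lp x (S y)) := fun _ _ => rfl
    have hcs : ∀ x y : A, succ x y = dne x y + dse x y := by
      intro x y
      have h := hOs (S x) (S y)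
      rw [hTS, hTS] at h
      rw [h, map_add, hdne, hdse, add_comm]
    have hcp : ∀ x y : A, prec x y = dnw x y + dsw x y := by
      intro x y
      have h := hOp (S x) (S y)
      rw [hTS, hTS] at h
      rw [h, map_add, hdnw, hdsw, add_comm]
    refine ⟨dse, dne, dnw, dsw, ⟨?_, ?_, ?_, ?_, ?_, ?_, ?_, ?_, ?_⟩, hcs, hcp⟩
    · intro x y z
      rw [show dse y z + dne y z + dnw y z + dsw y z = succ y z + prec y z from by
        rw [hcs, hcp]; abel]
      rw [hdnw (dnw x y) z, hdnw x y, hST, hdnw x (succ y z + prec y z)]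
      have h := LinearMap.congr_fun (b3 z y) (S x)
      simp only [comp_apply] at h
      rw [h]
    · intro x y z
      rw [← hcp y z, hdnw (dne x y) z, hdne x y, hST, hdne x (prec y z)]
      have h := LinearMap.congr_fun (b6 z y) (S x)
      simp only [comp_apply] at h
      rw [h]
    · intro x y z
      rw [← hcs y z, hdne (dne x y + dnw x y) z, hdne x y, hdnw x y, ← map_add T, hST,
        hdne x (succ y z)]
      have h := LinearMap.congr_fun (b9 z y) (S x)
      simp only [comp_apply, LinearMap.add_apply] at h
      rw [h]
    · intro x y z
      rw [hdnw (dsw x y) z, hdsw x y, hST, hdne y z, hdnw y z, ← map_add T,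
        hdsw x (T (rs z (S y) + rp z (S y))), hST]
      have h := LinearMap.congr_fun (b2 z x) (S y)
      simp only [comp_apply, LinearMap.add_apply] at h
      rw [h, add_comm (rp z (S y))]
    · intro x y z
      rw [hdnw (dse x y) z, hdse x y, hST, hdnw y z, hdse x (T (rp z (S y))), hST]
      have h := LinearMap.congr_fun (b5 z x) (S y)
      simp only [comp_apply] at h
      rw [h]
    · intro x y z
      rw [hdne (dse x y + dsw x y) z, hdse x y, hdsw x y, ← map_add T, hST, hdne y z,
        hdse x (T (rs z (S y))), hST]
      have h := LinearMap.congr_fun (b8 z x) (S y)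
      simp only [comp_apply, LinearMap.add_apply] at h
      rw [add_comm (ls x (S y)), h]
    · intro x y z
      rw [← hcp x y, hdsw (prec x y) z, hdse y z, hdsw y z, ← map_add T,
        hdsw x (T (ls y (S z) + lp y (S z))), hST]
      have h := LinearMap.congr_fun (b1 x y) (S z)
      simp only [comp_apply, LinearMap.add_apply] at h
      rw [h, add_comm (lp y (S z))]
    · intro x y z
      rw [← hcs x y, hdsw (succ x y) z, hdsw y z, hdse x (T (lp y (S z))), hST]
      have h := LinearMap.congr_fun (b4 x y) (S z)
      simp only [comp_apply] at h
      rw [h]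
    · intro x y z
      rw [show dse x y + dne x y + dnw x y + dsw x y = succ x y + prec x y from by
        rw [hcs, hcp]; abel]
      rw [hdse (succ x y + prec x y) z, hdse y z, hdse x (T (ls y (S z))), hST]
      have h := LinearMap.congr_fun (b7 x y) (S z)
      simp only [comp_apply] at h
      rw [h]
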